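/- (Normalization of the Monte Carlo correction term, used in Eq. (13) of the proof). Let K ≥ 1 and define the Monte Carlo estimator m(z, ws) = (1/K)·Σ_{i=1}^{K} exp(h(z, ws_i)) for ws : Fin K → T. Then Σ_z Σ_{ws : Fin K → T} pS(z)·ΠpT(ws)·( exp(h(z, ws_1)) / m(z, ws) ) = 1, where ws_1 is the first coordinate of ws. -/
import Mathlib


open Finset

variable {S T : Type*}

/-- Marginal of the joint pmf `p` on the first coordinate: `pS(z) = Σ_y p(z,y)`. -/
noncomputable def margS [Fintype T] (p : S × T → ℝ) (z : S) : ℝ := ∑ y, p (z, y)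

/-- Marginal of the joint pmf `p` on the second coordinate: `pT(y) = Σ_z p(z,y)`. -/
noncomputable def margT [Fintype S] (p : S × T → ℝ) (y : T) : ℝ := ∑ z, p (z, y)

/-- Mutual information `I(p) = Σ_{(z,y)} p(z,y)·log(p(z,y)/(pS(z)·pT(y)))`. -/
noncomputable def mutInfo [Fintype S] [Fintype T] (p : S × T → ℝ) : ℝ :=
  ∑ z, ∑ y, p (z, y) * Real.log (p (z, y) / (margS p z * margT p y))

/-- Entropy of the marginal `pT`: `H(pT) = −Σ_y pT(y)·log pT(y)`. -/
noncomputable def entropyT [Fintype S] [Fintype T] (p : S × T → ℝ) : ℝ :=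
  -∑ y, margT p y * Real.log (margT p y)

/-- Kullback–Leibler divergence on a finite type: `KL(u‖v) = Σ_x u(x)·log(u(x)/v(x))`. -/
noncomputable def klFin {α : Type*} [Fintype α] (u v : α → ℝ) : ℝ :=
  ∑ x, u x * Real.log (u x / v x)

/-- Conditional pmf on `T` given `z`: `p(·|z)(y) = p(z,y)/pS(z)`. -/
noncomputable def condT [Fintype T] (p : S × T → ℝ) (z : S) (y : T) : ℝ :=
  p (z, y) / margS p z

/-- Partition function of a critic `h`: `Z̃(z) = Σ_y pT(y)·exp(h(z,y))`. -/
noncomputable def partFun [Fintype S] [Fintype T] (p : S × T → ℝ) (h : S × T → ℝ) (z : S) : ℝ :=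
  ∑ y, margT p y * Real.exp (h (z, y))

/-- Decoder-based (unnormalized Barber–Agakov) lower bound
`I_DLB = Σ_{(z,y)} p(z,y)·h(z,y) − Σ_z pS(z)·log Z̃(z)`. -/
noncomputable def IDLB [Fintype S] [Fintype T] (p h : S × T → ℝ) : ℝ :=
  (∑ z, ∑ y, p (z, y) * h (z, y)) - ∑ z, margS p z * Real.log (partFun p h z)

/-- Monte Carlo estimator of the partition function from a positive sample `y`
and `K − 1 = n` negatives `ys`: `m(z; y, ys) = (1/K)·(e^{h(z,y)} + Σ_i e^{h(z,ys_i)})`,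
with `K = n + 1`. -/
noncomputable def mEst (h : S × T → ℝ) (n : ℕ) (z : S) (y : T) (ys : Fin n → T) : ℝ :=
  (Real.exp (h (z, y)) + ∑ i, Real.exp (h (z, ys i))) / (n + 1)

/-- InfoNCE bound with `K = n + 1` samples:
`I_NCE(K) = Σ_{(z,y)} Σ_{ys} p(z,y)·ΠpT(ys)·log( e^{h(z,y)} / m(z; y, ys) )`. -/
noncomputable def INCE [Fintype S] [Fintype T] (p h : S × T → ℝ) (n : ℕ) : ℝ :=
  ∑ z, ∑ y, ∑ ys : Fin n → T,
    p (z, y) * (∏ i, margT p (ys i)) *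
      Real.log (Real.exp (h (z, y)) / mEst h n z y ys)

/-- STATEMENT 10 (Normalization of the Monte Carlo correction term), with `K = n + 1 ≥ 1`. -/
theorem mc_correction_normalized [Fintype S] [Fintype T] [Nonempty S] [Nonempty T]
    (p : S × T → ℝ) (hp_pos : ∀ x, 0 < p x) (hp_sum : ∑ x, p x = 1)
    (h : S × T → ℝ) (n : ℕ) :
    ∑ z, ∑ ws : Fin (n + 1) → T,
        margS p z * (∏ i, margT p (ws i)) *
          (Real.exp (h (z, ws 0)) / ((∑ i, Real.exp (h (z, ws i))) / (n + 1))) = 1 := by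
  classical
  have hT : ∑ y, margT p y = 1 := by
    rw [← hp_sum, Fintype.sum_prod_type]
    rw [Finset.sum_comm]
    rfl
  have hS : ∑ z, margS p z = 1 := by
    rw [← hp_sum, Fintype.sum_prod_type]
    rfl
  have hspos : ∀ (z : S) (ws : Fin (n + 1) → T),
      0 < ∑ i, Real.exp (h (z, ws i)) :=
    fun z ws => Finset.sum_pos (fun i _ => Real.exp_pos _) Finset.univ_nonempty
  have symm : ∀ (z : S) (j : Fin (n + 1)),
      (∑ ws : Fin (n + 1) → T, (∏ i, margT p (ws i)) *
        (Real.exp (h (z, ws j)) / ∑ i, Real.exp (h (z, ws i))))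
      = ∑ ws : Fin (n + 1) → T, (∏ i, margT p (ws i)) *
        (Real.exp (h (z, ws 0)) / ∑ i, Real.exp (h (z, ws i))) := by
    intro z j
    refine Fintype.sum_equiv (Equiv.arrowCongr (Equiv.swap 0 j) (Equiv.refl T)) _ _ ?_
    intro ws
    have e0 : (Equiv.arrowCongr (Equiv.swap 0 j) (Equiv.refl T)) ws
        = fun i => ws (Equiv.swap 0 j i) := by
      funext i
      simp [Equiv.arrowCongr, Equiv.symm_swap]
    rw [e0]
    have hprod : (∏ i, margT p (ws (Equiv.swap 0 j i))) = ∏ i, margT p (ws i) :=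
      Equiv.prod_comp (Equiv.swap 0 j) (fun i => margT p (ws i))
    have hsum : (∑ i, Real.exp (h (z, ws (Equiv.swap 0 j i))))
        = ∑ i, Real.exp (h (z, ws i)) :=
      Equiv.sum_comp (Equiv.swap 0 j) (fun i => Real.exp (h (z, ws i)))
    rw [hprod, hsum]; simp [Equiv.swap_apply_left]
  have key : ∀ z : S,
      (∑ ws : Fin (n + 1) → T, (∏ i, margT p (ws i)) *
        (Real.exp (h (z, ws 0)) / ∑ i, Real.exp (h (z, ws i)))) = 1 / (n + 1) := by
    intro z
    have hcard : ((n : ℝ) + 1) ≠ 0 := by positivity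
    have h1 : (∑ j : Fin (n + 1), ∑ ws : Fin (n + 1) → T, (∏ i, margT p (ws i)) *
        (Real.exp (h (z, ws j)) / ∑ i, Real.exp (h (z, ws i)))) = 1 := by
      rw [Finset.sum_comm]
      have : ∀ ws : Fin (n + 1) → T,
          (∑ j : Fin (n + 1), (∏ i, margT p (ws i)) *
            (Real.exp (h (z, ws j)) / ∑ i, Real.exp (h (z, ws i))))
          = ∏ i, margT p (ws i) := by
        intro ws
        rw [← Finset.mul_sum, ← Finset.sum_div, div_self (hspos z ws).ne', mul_one]
      rw [Finset.sum_congr rfl (fun ws _ => this ws)]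
      calc (∑ ws : Fin (n + 1) → T, ∏ i, margT p (ws i))
          = ∏ _i : Fin (n + 1), ∑ y, margT p y := by
            rw [Finset.prod_univ_sum]
            rw [← Fintype.piFinset_univ]
        _ = 1 := by rw [hT]; simp
    have h2 : (∑ j : Fin (n + 1), ∑ ws : Fin (n + 1) → T, (∏ i, margT p (ws i)) *
        (Real.exp (h (z, ws j)) / ∑ i, Real.exp (h (z, ws i))))
        = (n + 1 : ℝ) * ∑ ws : Fin (n + 1) → T, (∏ i, margT p (ws i)) *
          (Real.exp (h (z, ws 0)) / ∑ i, Real.exp (h (z, ws i))) := by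
      rw [Finset.sum_congr rfl (fun j _ => symm z j)]
      simp [Finset.sum_const, Finset.card_univ, mul_comm]
    rw [h2] at h1
    field_simp at h1 ⊢
    linarith
  have step : ∀ z : S,
      (∑ ws : Fin (n + 1) → T, margS p z * (∏ i, margT p (ws i)) *
        (Real.exp (h (z, ws 0)) / ((∑ i, Real.exp (h (z, ws i))) / (n + 1))))
      = margS p z := by
    intro z
    have hcard : ((n : ℝ) + 1) ≠ 0 := by positivity
    have : ∀ ws : Fin (n + 1) → T,
        margS p z * (∏ i, margT p (ws i)) *
          (Real.exp (h (z, ws 0)) / ((∑ i, Real.exp (h (z, ws i))) / (n + 1)))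
        = margS p z * ((n + 1 : ℝ) * ((∏ i, margT p (ws i)) *
            (Real.exp (h (z, ws 0)) / ∑ i, Real.exp (h (z, ws i))))) := by
      intro ws
      rw [div_div_eq_mul_div]
      push_cast
      ring
    rw [Finset.sum_congr rfl (fun ws _ => this ws), ← Finset.mul_sum, ← Finset.mul_sum,
      key z]
    field_simp
  rw [Finset.sum_congr rfl (fun z _ => step z), hS]
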